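/- Let B : ℝ → L(X) be a family of bounded linear operators with B(t+1) = B(t) for all t and t ↦ B(t)x continuous for each x ∈ X, and let 𝓑 denote the bounded operator of multiplication by B(t) on BC(ℝ,X), (𝓑g)(t) = B(t)g(t). Suppose u, f ∈ BC(ℝ,X) satisfy the difference equation u(t) = B(t)u(t−1) + f(t) for all t ∈ ℝ. Then the circular spectrum of u satisfies σ(u) ⊂ (σ(𝓑) ∩ Γ) ∪ σ(f), where σ(𝓑) is the spectrum of 𝓑 as an operator on BC(ℝ,X). -/

import Mathlib

open MeasureTheory Complex Metric BoundedContinuousFunction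

noncomputable section

/-- The space `L^∞(ℝ, X)` of (classes of) essentially bounded strongly measurable functions. -/
abbrev Linf (X : Type*) [NormedAddCommGroup X] : Type _ := Lp X ⊤ (volume : Measure ℝ)

variable (X : Type*) [NormedAddCommGroup X] [NormedSpace ℂ X] [CompleteSpace X]

/-- The translation operator `S` on `L^∞(ℝ,X)`, `(S g)(t) = g (t + 1)`. -/
def transOp : Linf X →L[ℂ] Linf X :=
  (Lp.compMeasurePreservingₗᵢ ℂ (fun t : ℝ => t + 1)
    (measurePreserving_add_right volume 1)).toContinuousLinearMap

/-- The circular spectrum of `g ∈ L^∞(ℝ,X)`: the set of points `ξ₀` of the unit circle `Γ`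
such that `λ ↦ R(λ,S) g` admits no analytic extension to any neighborhood of `ξ₀`. -/
def circSpec (g : Linf X) : Set ℂ :=
  {ξ | ‖ξ‖ = 1 ∧ ¬∃ (U : Set ℂ) (F : ℂ → Linf X), IsOpen U ∧ ξ ∈ U ∧
    AnalyticOnNhd ℂ F U ∧ ∀ lam ∈ U, ‖lam‖ ≠ 1 → F lam = resolvent (transOp X) lam g}

/-- A bounded continuous function, viewed as an element of `L^∞(ℝ,X)`. -/
def bcToLinf (f : ℝ →ᵇ X) : Linf X :=
  (memLp_top_of_bound f.continuous.aestronglyMeasurable ‖f‖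
    (Filter.Eventually.of_forall fun t => f.norm_coe_le_norm t)).toLp f

/-- Restriction of a continuous linear operator to an invariant submodule. -/
def restrictCLM {E : Type*} [NormedAddCommGroup E] [NormedSpace ℂ E]
    (f : E →L[ℂ] E) (p : Submodule ℂ E) (h : ∀ x ∈ p, f x ∈ p) : p →L[ℂ] p where
  toFun x := ⟨f x, h x x.2⟩
  map_add' x y := by ext; simp
  map_smul' c x := by ext; simp
  cont := Continuous.subtype_mk (f.continuous.comp continuous_subtype_val) _

/-- The translation operator `S` on `BC(ℝ,X)`, `(S g)(t) = g (t + 1)`. -/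
def transBC : (ℝ →ᵇ X) →L[ℂ] (ℝ →ᵇ X) :=
  LinearMap.mkContinuous
    { toFun := fun g => g.compContinuous ⟨fun t => t + 1, by continuity⟩
      map_add' := fun g h => by ext t; simp
      map_smul' := fun c g => by ext t; simp }
    1 (fun g => by
      simpa using g.norm_compContinuous_le ⟨fun t => t + 1, by continuity⟩)

/-- The translation `S(τ)` on `BC(ℝ,X)`, `(S(τ) g)(t) = g (t + τ)`. -/
def translateBC (τ : ℝ) (g : ℝ →ᵇ X) : ℝ →ᵇ X :=
  g.compContinuous ⟨fun t => t + τ, by continuity⟩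

/-- A 1-periodic strongly continuous evolutionary process on `X`. -/
structure EvolProcess (X : Type*) [NormedAddCommGroup X] [NormedSpace ℂ X] where
  U : ℝ → ℝ → X →L[ℂ] X
  idem : ∀ t : ℝ, U t t = ContinuousLinearMap.id ℂ X
  comp : ∀ r s t : ℝ, r ≤ s → s ≤ t → (U t s).comp (U s r) = U t r
  strongCont : ∀ x : X, ContinuousOn (fun p : ℝ × ℝ => U p.1 p.2 x) {p : ℝ × ℝ | p.2 ≤ p.1}
  periodic : ∀ t s : ℝ, U (t + 1) (s + 1) = U t s
  bound : ∃ N ω : ℝ, 0 < N ∧ 0 < ω ∧ ∀ t s : ℝ, s ≤ t → ‖U t s‖ ≤ N * Real.exp (ω * (t - s))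

set_option linter.unusedSectionVars false

section Aux
variable {X}

lemma transBC_apply (g : ℝ →ᵇ X) (t : ℝ) : transBC X g t = g (t + 1) := rfl

lemma coeFn_bcToLinf (g : ℝ →ᵇ X) : bcToLinf X g =ᵐ[volume] g :=
  MemLp.coeFn_toLp _

lemma bcToLinf_add (g h : ℝ →ᵇ X) :
    bcToLinf X (g + h) = bcToLinf X g + bcToLinf X h := by
  apply Lp.ext
  filter_upwards [coeFn_bcToLinf (g + h), coeFn_bcToLinf g, coeFn_bcToLinf h,
    Lp.coeFn_add (bcToLinf X g) (bcToLinf X h)] with t h1 h2 h3 h4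
  rw [h1, h4]
  simp [h2, h3]

lemma bcToLinf_smul (c : ℂ) (g : ℝ →ᵇ X) :
    bcToLinf X (c • g) = c • bcToLinf X g := by
  apply Lp.ext
  filter_upwards [coeFn_bcToLinf (c • g), coeFn_bcToLinf g,
    Lp.coeFn_smul c (bcToLinf X g)] with t h1 h2 h3
  rw [h1, h3]
  simp [h2]

lemma norm_bcToLinf (g : ℝ →ᵇ X) : ‖bcToLinf X g‖ = ‖g‖ := by
  have hM : ‖bcToLinf X g‖ = (eLpNormEssSup (⇑g) volume).toReal := by
    rw [bcToLinf, Lp.norm_toLp, eLpNorm_exponent_top]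
  have hle : eLpNormEssSup (⇑g) volume ≤ ENNReal.ofReal ‖g‖ :=
    eLpNormEssSup_le_of_ae_bound
      (Filter.Eventually.of_forall fun t => g.norm_coe_le_norm t)
  have hfin : eLpNormEssSup (⇑g) volume ≠ ⊤ :=
    ne_top_of_le_ne_top ENNReal.ofReal_ne_top hle
  have hup : (eLpNormEssSup (⇑g) volume).toReal ≤ ‖g‖ := by
    calc (eLpNormEssSup (⇑g) volume).toReal
        ≤ (ENNReal.ofReal ‖g‖).toReal := ENNReal.toReal_mono ENNReal.ofReal_ne_top hle
      _ = ‖g‖ := ENNReal.toReal_ofReal (norm_nonneg _)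
  have hae : ∀ᵐ t ∂(volume : Measure ℝ),
      ‖g t‖ ≤ (eLpNormEssSup (⇑g) volume).toReal := by
    filter_upwards [ae_le_eLpNormEssSup (f := ⇑g) (μ := (volume : Measure ℝ))] with t ht
    have h2 := ENNReal.toReal_mono hfin ht
    simpa using h2
  have hpt : ∀ t, ‖g t‖ ≤ (eLpNormEssSup (⇑g) volume).toReal := by
    by_contra hcon
    push_neg at hcon
    obtain ⟨t₀, ht₀⟩ := hcon
    have hopen : IsOpen {s : ℝ | (eLpNormEssSup (⇑g) volume).toReal < ‖g s‖} :=
      isOpen_lt continuous_const (g.continuous.norm)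
    have hpos : 0 < volume {s : ℝ | (eLpNormEssSup (⇑g) volume).toReal < ‖g s‖} :=
      hopen.measure_pos volume ⟨t₀, ht₀⟩
    have hnull : volume {s : ℝ | (eLpNormEssSup (⇑g) volume).toReal < ‖g s‖} = 0 := by
      refine measure_mono_null (fun s hs => ?_) (ae_iff.mp hae)
      exact not_le.mpr hs
    exact absurd hnull hpos.ne'
  have hge : ‖g‖ ≤ (eLpNormEssSup (⇑g) volume).toReal :=
    (BoundedContinuousFunction.norm_le ENNReal.toReal_nonneg).mpr hpt
  rw [hM]
  exact le_antisymm hup hge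

/-- `bcToLinf` as a linear isometry. -/
def bcLI : (ℝ →ᵇ X) →ₗᵢ[ℂ] Linf X where
  toFun := bcToLinf X
  map_add' := bcToLinf_add
  map_smul' := bcToLinf_smul
  norm_map' := norm_bcToLinf

lemma bcToLinf_injective : Function.Injective (bcToLinf X) :=
  (bcLI (X := X)).injective

end Aux
section Aux2
variable {X}

/-- Translation by `-1` on `BC(ℝ,X)`. -/
def transBC' (X : Type*) [NormedAddCommGroup X] [NormedSpace ℂ X] [CompleteSpace X] :
    (ℝ →ᵇ X) →L[ℂ] (ℝ →ᵇ X) :=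
  LinearMap.mkContinuous
    { toFun := fun g => g.compContinuous ⟨fun t => t + (-1), by continuity⟩
      map_add' := fun g h => by ext t; simp
      map_smul' := fun c g => by ext t; simp }
    1 (fun g => by
      simpa using g.norm_compContinuous_le ⟨fun t => t + (-1), by continuity⟩)

lemma transBC'_apply (g : ℝ →ᵇ X) (t : ℝ) : transBC' X g t = g (t + (-1)) := rfl

lemma transBC_mul_transBC' : transBC X * transBC' X = 1 := by
  ext g t
  show transBC X (transBC' X g) t = g t
  rw [transBC_apply, transBC'_apply]
  norm_num

lemma transBC'_mul_transBC : transBC' X * transBC X = 1 := by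
  ext g t
  show transBC' X (transBC X g) t = g t
  rw [transBC'_apply, transBC_apply]
  norm_num

lemma norm_transBC_le : ‖transBC X‖ ≤ 1 :=
  LinearMap.mkContinuous_norm_le _ zero_le_one _

lemma norm_transBC'_le : ‖transBC' X‖ ≤ 1 :=
  LinearMap.mkContinuous_norm_le _ zero_le_one _

/-- Translation by `-1` on `L^∞(ℝ,X)`. -/
def transOp' (X : Type*) [NormedAddCommGroup X] [NormedSpace ℂ X] [CompleteSpace X] :
    Linf X →L[ℂ] Linf X :=
  (Lp.compMeasurePreservingₗᵢ ℂ (fun t : ℝ => t + (-1))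
    (measurePreserving_add_right volume (-1))).toContinuousLinearMap

lemma coeFn_transOp (g : Linf X) :
    transOp X g =ᵐ[volume] (⇑g) ∘ (fun t : ℝ => t + 1) :=
  Lp.coeFn_compMeasurePreserving g (measurePreserving_add_right volume 1)

lemma coeFn_transOp' (g : Linf X) :
    transOp' X g =ᵐ[volume] (⇑g) ∘ (fun t : ℝ => t + (-1)) :=
  Lp.coeFn_compMeasurePreserving g (measurePreserving_add_right volume (-1))

lemma transOp_mul_transOp' : transOp X * transOp' X = 1 := by
  refine ContinuousLinearMap.ext fun g => Lp.ext ?_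
  rw [ContinuousLinearMap.mul_apply, ContinuousLinearMap.one_apply]
  have h1 := coeFn_transOp (transOp' X g)
  have h2 : ((⇑(transOp' X g)) ∘ (fun t : ℝ => t + 1)) =ᵐ[volume]
      (((⇑g) ∘ (fun t : ℝ => t + (-1))) ∘ (fun t : ℝ => t + 1)) :=
    (measurePreserving_add_right volume 1).quasiMeasurePreserving.ae_eq_comp
      (coeFn_transOp' g)
  refine ((h1.trans h2).trans ?_)
  apply Filter.Eventually.of_forall
  intro t
  show g (t + 1 + (-1)) = _
  norm_num

lemma transOp'_mul_transOp : transOp' X * transOp X = 1 := by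
  refine ContinuousLinearMap.ext fun g => Lp.ext ?_
  rw [ContinuousLinearMap.mul_apply, ContinuousLinearMap.one_apply]
  have h1 := coeFn_transOp' (transOp X g)
  have h2 : ((⇑(transOp X g)) ∘ (fun t : ℝ => t + (-1))) =ᵐ[volume]
      (((⇑g) ∘ (fun t : ℝ => t + 1)) ∘ (fun t : ℝ => t + (-1))) :=
    (measurePreserving_add_right volume (-1)).quasiMeasurePreserving.ae_eq_comp
      (coeFn_transOp g)
  refine ((h1.trans h2).trans ?_)
  apply Filter.Eventually.of_forall
  intro t
  show g (t + (-1) + 1) = _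
  norm_num

lemma norm_transOp_le : ‖transOp X‖ ≤ 1 :=
  LinearIsometry.norm_toContinuousLinearMap_le _

lemma norm_transOp'_le : ‖transOp' X‖ ≤ 1 :=
  LinearIsometry.norm_toContinuousLinearMap_le _

/-- intertwining -/
lemma bcToLinf_transBC (g : ℝ →ᵇ X) :
    bcToLinf X (transBC X g) = transOp X (bcToLinf X g) := by
  apply Lp.ext
  have h1 := coeFn_bcToLinf (transBC X g)
  have h2 := coeFn_transOp (bcToLinf X g)
  have h3 : ((⇑(bcToLinf X g)) ∘ (fun t : ℝ => t + 1)) =ᵐ[volume]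
      ((⇑g) ∘ (fun t : ℝ => t + 1)) :=
    (measurePreserving_add_right volume 1).quasiMeasurePreserving.ae_eq_comp
      (coeFn_bcToLinf g)
  refine h1.trans (Filter.EventuallyEq.trans ?_ (h2.trans h3).symm)
  exact Filter.Eventually.of_forall fun t => rfl

end Aux2
section Aux3
variable {X}

lemma isUnit_algebraMap_sub {R : Type*} [NormedRing R] [NormedAlgebra ℂ R] [CompleteSpace R]
    {T T' : R} (hTT' : T * T' = 1) (hT'T : T' * T = 1) (hT : ‖T‖ ≤ 1) (hT' : ‖T'‖ ≤ 1)
    {lam : ℂ} (hlam : ‖lam‖ ≠ 1) : IsUnit (algebraMap ℂ R lam - T) := by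
  rcases lt_or_gt_of_ne hlam with h | h
  · have hu : ‖lam • T'‖ < 1 := by
      calc ‖lam • T'‖ = ‖lam‖ * ‖T'‖ := norm_smul lam T'
        _ ≤ ‖lam‖ * 1 := by
            exact mul_le_mul_of_nonneg_left hT' (norm_nonneg lam)
        _ < 1 := by rwa [mul_one]
    have h1 : IsUnit ((1 : R) - lam • T') := ⟨Units.oneSub _ hu, rfl⟩
    have h2 : IsUnit T := ⟨⟨T, T', hTT', hT'T⟩, rfl⟩
    have key : algebraMap ℂ R lam - T = -(T * ((1 : R) - lam • T')) := by
      rw [mul_sub, mul_one, mul_smul_comm, hTT', Algebra.algebraMap_eq_smul_one]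
      abel
    rw [key]
    exact (h2.mul h1).neg
  · have hlam0 : lam ≠ 0 := by
      intro h0
      rw [h0, norm_zero] at h
      linarith
    have hu : ‖lam⁻¹ • T‖ < 1 := by
      calc ‖lam⁻¹ • T‖ = ‖lam‖⁻¹ * ‖T‖ := by rw [norm_smul, norm_inv]
        _ ≤ ‖lam‖⁻¹ * 1 := mul_le_mul_of_nonneg_left hT (by positivity)
        _ < 1 := by
            rw [mul_one]
            exact inv_lt_one_of_one_lt₀ h
    have h1 : IsUnit ((1 : R) - lam⁻¹ • T) := ⟨Units.oneSub _ hu, rfl⟩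
    have h2 : IsUnit (algebraMap ℂ R lam) :=
      (isUnit_iff_ne_zero.mpr hlam0).map (algebraMap ℂ R)
    have key : algebraMap ℂ R lam - T = algebraMap ℂ R lam * ((1 : R) - lam⁻¹ • T) := by
      rw [mul_sub, mul_one, Algebra.algebraMap_eq_smul_one, smul_mul_assoc, one_mul,
        smul_smul, mul_inv_cancel₀ hlam0, one_smul]
    rw [key]
    exact h2.mul h1

lemma isUnit_transBC_sub {lam : ℂ} (hlam : ‖lam‖ ≠ 1) :
    IsUnit (algebraMap ℂ ((ℝ →ᵇ X) →L[ℂ] (ℝ →ᵇ X)) lam - transBC X) :=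
  isUnit_algebraMap_sub transBC_mul_transBC' transBC'_mul_transBC
    norm_transBC_le norm_transBC'_le hlam

lemma isUnit_transOp_sub {lam : ℂ} (hlam : ‖lam‖ ≠ 1) :
    IsUnit (algebraMap ℂ (Linf X →L[ℂ] Linf X) lam - transOp X) :=
  isUnit_algebraMap_sub transOp_mul_transOp' transOp'_mul_transOp
    norm_transOp_le norm_transOp'_le hlam

lemma algebraMap_clm_apply {E : Type*} [NormedAddCommGroup E] [NormedSpace ℂ E]
    (lam : ℂ) (x : E) : (algebraMap ℂ (E →L[ℂ] E) lam) x = lam • x := by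
  rw [Algebra.algebraMap_eq_smul_one]
  simp

lemma isUnit_clm_injective {E : Type*} [NormedAddCommGroup E] [NormedSpace ℂ E]
    {T : E →L[ℂ] E} (h : IsUnit T) : Function.Injective T := by
  intro x y hxy
  have h1 := congrArg (fun z => Ring.inverse T z) hxy
  simpa [← ContinuousLinearMap.mul_apply, Ring.inverse_mul_cancel _ h] using h1

lemma resolvent_cancel {E : Type*} [NormedAddCommGroup E] [NormedSpace ℂ E]
    {T : E →L[ℂ] E} {lam : ℂ} (h : IsUnit (algebraMap ℂ (E →L[ℂ] E) lam - T)) (x : E) :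
    (algebraMap ℂ (E →L[ℂ] E) lam - T) (resolvent T lam x) = x := by
  rw [resolvent, ← ContinuousLinearMap.mul_apply, Ring.mul_inverse_cancel _ h,
    ContinuousLinearMap.one_apply]

lemma resolvent_cancel' {E : Type*} [NormedAddCommGroup E] [NormedSpace ℂ E]
    {T : E →L[ℂ] E} {lam : ℂ} (h : IsUnit (algebraMap ℂ (E →L[ℂ] E) lam - T)) (x : E) :
    resolvent T lam ((algebraMap ℂ (E →L[ℂ] E) lam - T) x) = x := by
  rw [resolvent, ← ContinuousLinearMap.mul_apply, Ring.inverse_mul_cancel _ h,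
    ContinuousLinearMap.one_apply]

/-- Lemma A : resolvent of the translation intertwines with `bcToLinf`. -/
lemma resolvent_transOp_bc (g : ℝ →ᵇ X) {lam : ℂ} (hlam : ‖lam‖ ≠ 1) :
    resolvent (transOp X) lam (bcToLinf X g) = bcToLinf X (resolvent (transBC X) lam g) := by
  have hb := isUnit_transBC_sub (X := X) hlam
  have ho := isUnit_transOp_sub (X := X) hlam
  set w := resolvent (transBC X) lam g with hw
  have h1 : (algebraMap ℂ _ lam - transBC X) w = g := resolvent_cancel hb g
  have h2 : (algebraMap ℂ _ lam - transOp X) (bcToLinf X w) = bcToLinf X g := by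
    rw [← h1]
    rw [ContinuousLinearMap.sub_apply, ContinuousLinearMap.sub_apply,
      algebraMap_clm_apply, algebraMap_clm_apply, ← bcToLinf_transBC, ← bcToLinf_smul]
    have : bcToLinf X (lam • w) - bcToLinf X (transBC X w)
        = bcToLinf X (lam • w - transBC X w) := ((bcLI (X := X)).map_sub (lam • w) (transBC X w)).symm
    rw [this]
  calc resolvent (transOp X) lam (bcToLinf X g)
      = resolvent (transOp X) lam ((algebraMap ℂ _ lam - transOp X) (bcToLinf X w)) := by
        rw [h2]
    _ = bcToLinf X w := resolvent_cancel' ho _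

end Aux3
section Aux4
variable {X}

lemma commute_ring_inverse {R : Type*} [Ring R] {A C : R} (h : IsUnit C)
    (hc : A * C = C * A) : Ring.inverse C * A = A * Ring.inverse C := by
  have hCi : C * Ring.inverse C = 1 := Ring.mul_inverse_cancel _ h
  have hiC : Ring.inverse C * C = 1 := Ring.inverse_mul_cancel _ h
  calc Ring.inverse C * A
      = Ring.inverse C * (A * (C * Ring.inverse C)) := by rw [hCi, mul_one]
    _ = Ring.inverse C * ((A * C) * Ring.inverse C) := by rw [mul_assoc]
    _ = Ring.inverse C * ((C * A) * Ring.inverse C) := by rw [hc]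
    _ = (Ring.inverse C * C) * (A * Ring.inverse C) := by simp only [mul_assoc]
    _ = A * Ring.inverse C := by rw [hiC, one_mul]

/-- Lemma B : the key resolvent identity following from the difference equation. -/
lemma key_identity (𝓑 : (ℝ →ᵇ X) →L[ℂ] (ℝ →ᵇ X))
    (hcomm : 𝓑 * transBC X = transBC X * 𝓑)
    {lam : ℂ} (hlam : ‖lam‖ ≠ 1)
    (hres : IsUnit (algebraMap ℂ ((ℝ →ᵇ X) →L[ℂ] (ℝ →ᵇ X)) lam - 𝓑))
    {u f : ℝ →ᵇ X} (hdiff : transBC X u = 𝓑 u + transBC X f) :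
    resolvent (transBC X) lam u
      = resolvent 𝓑 lam ((u - f) + lam • (resolvent (transBC X) lam f)) := by
  set S := transBC X with hSdef
  set ℓ : (ℝ →ᵇ X) →L[ℂ] (ℝ →ᵇ X) := algebraMap ℂ ((ℝ →ᵇ X) →L[ℂ] (ℝ →ᵇ X)) lam with hldef
  have hS : IsUnit (ℓ - S) := isUnit_transBC_sub hlam
  have hc : (ℓ - S) * (ℓ - 𝓑) = (ℓ - 𝓑) * (ℓ - S) := by
    have h1 : Commute ℓ 𝓑 := Algebra.commutes lam 𝓑
    have h2 : Commute ℓ S := Algebra.commutes lam S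
    have h3 : Commute 𝓑 S := hcomm
    exact Commute.sub_left ((Commute.refl ℓ).sub_right h1) (h2.symm.sub_right h3.symm)
  have hRA_S : Ring.inverse (ℓ - 𝓑) * (ℓ - S) = (ℓ - S) * Ring.inverse (ℓ - 𝓑) :=
    commute_ring_inverse hres hc
  have injB := isUnit_clm_injective hres
  have injS := isUnit_clm_injective hS
  apply injS
  apply injB
  -- left side
  have hL : (ℓ - S) (resolvent S lam u) = u := resolvent_cancel hS u
  -- right side
  set v : ℝ →ᵇ X := (u - f) + lam • (resolvent S lam f) with hv
  have hstep1 : (ℓ - S) (resolvent 𝓑 lam v) = Ring.inverse (ℓ - 𝓑) ((ℓ - S) v) := by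
    have h4 := congrArg (fun T : (ℝ →ᵇ X) →L[ℂ] (ℝ →ᵇ X) => T v) hRA_S
    simpa [resolvent, ContinuousLinearMap.mul_apply] using h4.symm
  have hstep2 : (ℓ - S) v = (ℓ - S) (u - f) + lam • f := by
    rw [hv, map_add, _root_.map_smul, resolvent_cancel hS f]
  have hstep3 : (ℓ - 𝓑) (Ring.inverse (ℓ - 𝓑) ((ℓ - S) v)) = (ℓ - S) v := by
    rw [← ContinuousLinearMap.mul_apply, Ring.mul_inverse_cancel _ hres,
      ContinuousLinearMap.one_apply]
  rw [hL, hstep1, hstep3, hstep2]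
  -- final pointwise identity
  simp only [ContinuousLinearMap.sub_apply, algebraMap_clm_apply, map_sub, hldef]
  rw [hdiff]
  abel

end Aux4
section Aux5

/-- Analytic functions with values in the (closed) range of a linear isometry lift analytically. -/
lemma analytic_lift {E F : Type*} [NormedAddCommGroup E] [NormedSpace ℂ E] [CompleteSpace E]
    [NormedAddCommGroup F] [NormedSpace ℂ F]
    (e : E →ₗᵢ[ℂ] F) {U : Set ℂ} (hU : IsOpen U) {Fn : ℂ → F}
    (hFn : AnalyticOnNhd ℂ Fn U) (hmem : ∀ z ∈ U, ∃ g, e g = Fn z) :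
    ∃ G : ℂ → E, AnalyticOnNhd ℂ G U ∧ ∀ z ∈ U, e (G z) = Fn z := by
  classical
  set G : ℂ → E := fun z => if h : ∃ g, e g = Fn z then h.choose else 0 with hG
  have heG : ∀ z ∈ U, e (G z) = Fn z := by
    intro z hz
    rw [hG]
    simp only [dif_pos (hmem z hz)]
    exact (hmem z hz).choose_spec
  refine ⟨G, ?_, heG⟩
  have hrange : IsClosed (Set.range e) := e.isometry.isClosedEmbedding.isClosed_range
  refine DifferentiableOn.analyticOnNhd ?_ hU
  intro z hz
  have hFd : HasDerivAt Fn (deriv Fn z) z := (hFn z hz).differentiableAt.hasDerivAt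
  have hUz : ∀ᶠ w in nhdsWithin z {z}ᶜ, w ∈ U :=
    Filter.Eventually.filter_mono nhdsWithin_le_nhds (hU.eventually_mem hz)
  have hdmem : deriv Fn z ∈ Set.range e := by
    have hslope : Filter.Tendsto (slope Fn z) (nhdsWithin z {z}ᶜ) (nhds (deriv Fn z)) :=
      hasDerivAt_iff_tendsto_slope.1 hFd
    refine hrange.mem_of_tendsto hslope ?_
    filter_upwards [hUz] with w hw
    obtain ⟨gw, hgw⟩ := hmem w hw
    obtain ⟨gz, hgz⟩ := hmem z hz
    refine ⟨(w - z)⁻¹ • (gw - gz), ?_⟩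
    rw [slope_def_module, _root_.map_smul, map_sub, hgw, hgz]
  obtain ⟨d, hd⟩ := hdmem
  have hGd : HasDerivAt G d z := by
    rw [hasDerivAt_iff_isLittleO] at hFd ⊢
    rw [← Asymptotics.isLittleO_norm_left] at hFd ⊢
    refine hFd.congr' ?_ Filter.EventuallyEq.rfl
    filter_upwards [hU.eventually_mem hz] with w hw
    rw [← heG w hw, ← heG z hz, ← hd, ← _root_.map_smul, ← map_sub, ← map_sub, e.norm_map]
  exact hGd.differentiableAt.differentiableWithinAt

end Aux5

set_option maxHeartbeats 1000000

/-- if `u, f ∈ BC(ℝ,X)` satisfy `u(t) = B(t) u(t-1) + f(t)` with `B` 1-periodic and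
strongly continuous, and `𝓑` is the multiplication operator by `B(t)` on `BC(ℝ,X)`, then
`σ(u) ⊆ (σ(𝓑) ∩ Γ) ∪ σ(f)`. -/
theorem stmt9 (B : ℝ → X →L[ℂ] X) (hBper : ∀ t : ℝ, B (t + 1) = B t)
    (hBcont : ∀ x : X, Continuous fun t : ℝ => B t x)
    (𝓑 : (ℝ →ᵇ X) →L[ℂ] (ℝ →ᵇ X)) (h𝓑 : ∀ (g : ℝ →ᵇ X) (t : ℝ), 𝓑 g t = B t (g t))
    (u f : ℝ →ᵇ X) (hu : ∀ t : ℝ, u t = B t (u (t - 1)) + f t) :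
    circSpec X (bcToLinf X u) ⊆
      (spectrum ℂ 𝓑 ∩ Metric.sphere (0 : ℂ) 1) ∪ circSpec X (bcToLinf X f) := by
  -- commutation of the multiplication operator with the translation
  have hcomm : 𝓑 * transBC X = transBC X * 𝓑 := by
    ext g t
    show 𝓑 (transBC X g) t = transBC X (𝓑 g) t
    rw [h𝓑, transBC_apply, transBC_apply, h𝓑, hBper]
  -- the difference equation in operator form
  have hdiff : transBC X u = 𝓑 u + transBC X f := by
    ext t
    show u (t + 1) = 𝓑 u t + f (t + 1)
    rw [h𝓑, hu (t + 1), hBper]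
    norm_num
  intro ξ hξ
  obtain ⟨hξnorm, hξna⟩ := hξ
  by_contra hcon
  rw [Set.mem_union] at hcon
  push_neg at hcon
  obtain ⟨hc1, hc2⟩ := hcon
  have hξspec : ξ ∉ spectrum ℂ 𝓑 := by
    intro hmem
    exact hc1 ⟨hmem, by simpa [mem_sphere_zero_iff_norm] using hξnorm⟩
  have hf' : ∃ (U : Set ℂ) (F : ℂ → Linf X), IsOpen U ∧ ξ ∈ U ∧ AnalyticOnNhd ℂ F U ∧
      ∀ lam ∈ U, ‖lam‖ ≠ 1 → F lam = resolvent (transOp X) lam (bcToLinf X f) := by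
    by_contra h
    exact hc2 ⟨hξnorm, h⟩
  obtain ⟨Uf, Ff, hUo, hξU, hFa, hFeq⟩ := hf'
  apply hξna
  -- the values of `Ff` lie in the range of `bcToLinf`
  have hmem : ∀ z ∈ Uf, ∃ g : ℝ →ᵇ X, bcLI (X := X) g = Ff z := by
    intro z hz
    by_cases hz1 : ‖z‖ = 1
    · have hcl : IsClosed (Set.range (bcLI (X := X))) :=
        (bcLI (X := X)).isometry.isClosedEmbedding.isClosed_range
      have hcont : Continuous fun t : ℝ => ((1 + t : ℝ) : ℂ) * z := by continuity
      have ht : Filter.Tendsto (fun t : ℝ => ((1 + t : ℝ) : ℂ) * z)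
          (nhdsWithin 0 (Set.Ioi 0)) (nhds z) := by
        have h0 : ((1 + (0 : ℝ) : ℝ) : ℂ) * z = z := by norm_num
        simpa [h0] using (hcont.tendsto 0).mono_left nhdsWithin_le_nhds
      have hev : ∀ᶠ t in nhdsWithin (0 : ℝ) (Set.Ioi 0),
          Ff (((1 + t : ℝ) : ℂ) * z) ∈ Set.range (bcLI (X := X)) := by
        have hUev : ∀ᶠ t in nhdsWithin (0 : ℝ) (Set.Ioi 0), ((1 + t : ℝ) : ℂ) * z ∈ Uf :=
          ht.eventually (hUo.eventually_mem hz)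
        have hpos : ∀ᶠ t in nhdsWithin (0 : ℝ) (Set.Ioi 0), t ∈ Set.Ioi (0 : ℝ) :=
          self_mem_nhdsWithin
        filter_upwards [hUev, hpos] with t htU htpos
        have h1t : (0 : ℝ) < 1 + t := by
          have := Set.mem_Ioi.mp htpos
          linarith
        have hnorm : ‖((1 + t : ℝ) : ℂ) * z‖ ≠ 1 := by
          rw [norm_mul, hz1, mul_one, Complex.norm_real, Real.norm_eq_abs, abs_of_pos h1t]
          have := Set.mem_Ioi.mp htpos
          intro hcontr
          linarith
        rw [hFeq _ htU hnorm, resolvent_transOp_bc f hnorm]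
        exact ⟨resolvent (transBC X) (((1 + t : ℝ) : ℂ) * z) f, rfl⟩
      have htend : Filter.Tendsto (fun t : ℝ => Ff (((1 + t : ℝ) : ℂ) * z))
          (nhdsWithin (0 : ℝ) (Set.Ioi 0)) (nhds (Ff z)) :=
        ((hFa z hz).continuousAt.tendsto).comp ht
      exact hcl.mem_of_tendsto htend hev
    · rw [hFeq z hz hz1, resolvent_transOp_bc f hz1]
      exact ⟨_, rfl⟩
  obtain ⟨G, hGa, hGe⟩ := analytic_lift (bcLI (X := X)) hUo hFa hmem
  set ι : (ℝ →ᵇ X) →L[ℂ] Linf X := (bcLI (X := X)).toContinuousLinearMap with hι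
  have hUopen : IsOpen (Uf ∩ (spectrum ℂ 𝓑)ᶜ) :=
    hUo.inter (spectrum.isClosed 𝓑).isOpen_compl
  refine ⟨Uf ∩ (spectrum ℂ 𝓑)ᶜ,
    fun lam => ι (resolvent 𝓑 lam ((u - f) + lam • G lam)),
    hUopen, ⟨hξU, hξspec⟩, ?_, ?_⟩
  · -- analyticity
    refine DifferentiableOn.analyticOnNhd ?_ hUopen
    intro z hz
    obtain ⟨hz1, hz2⟩ := hz
    have hzρ : z ∈ resolventSet ℂ 𝓑 :=
      spectrum.mem_resolventSet_iff.mpr (spectrum.notMem_iff.mp hz2)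
    have hR : DifferentiableAt ℂ (fun lam => resolvent 𝓑 lam) z :=
      (spectrum.hasDerivAt_resolvent hzρ).differentiableAt
    have hv : DifferentiableAt ℂ (fun lam : ℂ => (u - f) + lam • G lam) z :=
      (differentiableAt_const _).add
        (differentiableAt_id.smul (hGa z hz1).differentiableAt)
    have happ : DifferentiableAt ℂ (fun lam : ℂ => resolvent 𝓑 lam ((u - f) + lam • G lam)) z :=
      hR.clm_apply hv
    exact ((ι.differentiable.differentiableAt).comp z happ).differentiableWithinAt
  · -- the extension property
    intro lam hlam hnorm
    obtain ⟨hl1, hl2⟩ := hlam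
    have hres : IsUnit (algebraMap ℂ ((ℝ →ᵇ X) →L[ℂ] (ℝ →ᵇ X)) lam - 𝓑) :=
      spectrum.notMem_iff.mp hl2
    have hGlam : G lam = resolvent (transBC X) lam f := by
      apply bcToLinf_injective (X := X)
      have h1 : bcToLinf X (G lam) = Ff lam := hGe lam hl1
      rw [h1, hFeq lam hl1 hnorm, resolvent_transOp_bc f hnorm]
    have hkey := key_identity 𝓑 hcomm hnorm hres hdiff
    show ι (resolvent 𝓑 lam ((u - f) + lam • G lam)) = resolvent (transOp X) lam (bcToLinf X u)
    rw [resolvent_transOp_bc u hnorm, hkey, hGlam]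
    rfl

end
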